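/- The involution β acts on the fixed point set of α, permuting its 16 component 3-tori without fixed points, so that Fix(α)/⟨β⟩ consists of 8 tori; similarly γ acts freely on Fix(α), and the group ⟨β,γ⟩ ≅ (ℤ/2)² acts freely on the set of 16 components of Fix(α) with 4 orbits. -/
import Mathlib


/-- The circle `ℝ/ℤ`. -/
abbrev Circ := AddCircle (1 : ℝ)

/-- The 7-torus `𝕋⁷ = ℝ⁷/ℤ⁷`. -/
abbrev T7 := Fin 7 → Circ

noncomputable def half : Circ := ((1/2 : ℝ) : Circ)

/-- The involution `α(x) = (x₁,x₂,x₃,-x₄,-x₅,-x₆,-x₇)`. -/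
noncomputable def tα (x : T7) : T7 := ![x 0, x 1, x 2, -x 3, -x 4, -x 5, -x 6]

/-- The involution `β(x) = (x₁,-x₂,-x₃,x₄,x₅,-x₆+1/2,-x₇)`. -/
noncomputable def tβ (x : T7) : T7 := ![x 0, -x 1, -x 2, x 3, x 4, -x 5 + half, -x 6]

/-- The involution `γ(x) = (-x₁,x₂,-x₃,x₄,-x₅+1/2,x₆,-x₇+1/2)`. -/
noncomputable def tγ (x : T7) : T7 := ![-x 0, x 1, -x 2, x 3, -x 4 + half, x 5, -x 6 + half]

/-- The component of `Fix(α)` indexed by `c ∈ {0,1/2}⁴` (recorded as a Boolean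
quadruple): the 3-torus where coordinates `x₄,x₅,x₆,x₇` take the values
prescribed by `c`. -/
noncomputable def compα (c : Fin 4 → Bool) : Set T7 :=
  {x | ∀ i : Fin 4, x (![3, 4, 5, 6] i) = if c i then half else 0}

/-- The permutation induced by `β` on the 16 components of `Fix(α)`:
it flips the `x₆`-coordinate label. -/
def βIdx (c : Fin 4 → Bool) : Fin 4 → Bool := ![c 0, c 1, !c 2, c 3]

/-- The permutation induced by `γ` on the 16 components of `Fix(α)`:
it flips the `x₅`- and `x₇`-coordinate labels. -/
def γIdx (c : Fin 4 → Bool) : Fin 4 → Bool := ![c 0, !c 1, c 2, !c 3]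


lemma half_ne_zero : half ≠ 0 := by
  intro h
  rw [half, AddCircle.coe_eq_zero_iff] at h
  obtain ⟨n, hn⟩ := h
  have : (n : ℝ) = 1/2 := by simpa using hn
  have h2 : ((2*n : ℤ) : ℝ) = 1 := by push_cast; linarith
  have : (2*n : ℤ) = 1 := by exact_mod_cast h2
  omega

lemma half_add_half : half + half = 0 := by
  rw [half, ← AddCircle.coe_add, AddCircle.coe_eq_zero_iff]
  exact ⟨1, by norm_num⟩

lemma neg_half : -half = half := by
  rw [neg_eq_iff_add_eq_zero, half_add_half]

lemma two_eq_zero (y : Circ) (h : y + y = 0) : y = 0 ∨ y = half := by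
  induction y using QuotientAddGroup.induction_on with
  | H r =>
    rw [← AddCircle.coe_add, AddCircle.coe_eq_zero_iff] at h
    obtain ⟨n, hn⟩ := h
    have hn' : (n : ℝ) = r + r := by simpa using hn
    rcases Int.even_or_odd n with ⟨k, hk⟩ | ⟨k, hk⟩
    · left
      rw [AddCircle.coe_eq_zero_iff]
      exact ⟨k, by push_cast [hk, zsmul_eq_mul] at hn' ⊢; linarith⟩
    · right
      have hz : ((r : ℝ) : Circ) - half = 0 := by
        rw [half, ← AddCircle.coe_sub, AddCircle.coe_eq_zero_iff]
        exact ⟨k, by push_cast [hk, zsmul_eq_mul] at hn' ⊢; linarith⟩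
      exact sub_eq_zero.mp hz

lemma exists_bool (y : Circ) (h : -y = y) : ∃ b : Bool, y = if b then half else 0 := by
  rcases two_eq_zero y (neg_eq_iff_add_eq_zero.mp h) with h0 | hh
  · exact ⟨false, by simp [h0]⟩
  · exact ⟨true, by simp [hh]⟩

lemma neg_if (b : Bool) : -(if b then half else 0) = (if b then half else 0) := by
  cases b <;> simp [neg_half]


/-- `β` acts on `Fix(α)` permuting its 16 component 3-tori without fixed
points, pairing them so `Fix(α)/⟨β⟩` consists of 8 tori; likewise `γ` acts
freely on `Fix(α)`, and `⟨β,γ⟩ ≅ (ℤ/2)²` acts freely on the set of 16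
components with exactly 4 orbits. -/
theorem beta_gamma_on_fix_alpha :
    -- `Fix(α)` is the union of the 16 components
    (∀ x : T7, tα x = x ↔ ∃ c, x ∈ compα c) ∧
    -- `β` and `γ` act on `Fix(α)` without fixed points
    (∀ x : T7, tα x = x → tβ x ≠ x) ∧
    (∀ x : T7, tα x = x → tγ x ≠ x) ∧
    -- `β`, `γ` send the component `c` to `βIdx c`, `γIdx c` respectively
    (∀ c, ∀ x ∈ compα c, tβ x ∈ compα (βIdx c)) ∧
    (∀ c, ∀ x ∈ compα c, tγ x ∈ compα (γIdx c)) ∧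
    -- the induced `(ℤ/2)²`-action on the 16 components is free
    (∀ c, βIdx (βIdx c) = c ∧ γIdx (γIdx c) = c ∧ βIdx (γIdx c) = γIdx (βIdx c)) ∧
    (∀ c, βIdx c ≠ c ∧ γIdx c ≠ c ∧ βIdx (γIdx c) ≠ c) ∧
    -- and it has exactly 4 orbits
    (∃ r : (Fin 4 → Bool) → Fin 4, Function.Surjective r ∧
      (∀ c, r (βIdx c) = r c ∧ r (γIdx c) = r c) ∧
      (∀ c c', r c = r c' →
        c' = c ∨ c' = βIdx c ∨ c' = γIdx c ∨ c' = βIdx (γIdx c))) := by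
  
  refine ⟨?_, ?_, ?_, ?_, ?_, by decide, by decide, ?_⟩
  · intro x
    constructor
    · intro h
      obtain ⟨b3, h3⟩ := exists_bool (x 3) (congrFun h 3)
      obtain ⟨b4, h4⟩ := exists_bool (x 4) (congrFun h 4)
      obtain ⟨b5, h5⟩ := exists_bool (x 5) (congrFun h 5)
      obtain ⟨b6, h6⟩ := exists_bool (x 6) (congrFun h 6)
      refine ⟨![b3, b4, b5, b6], fun i => ?_⟩
      fin_cases i <;> simpa
    · rintro ⟨c, hc⟩
      funext i
      have h0 := hc 0; have h1 := hc 1; have h2 := hc 2; have h3 := hc 3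
      simp only [Matrix.cons_val_zero, Matrix.cons_val_one, Matrix.head_cons,
        Matrix.cons_val_two, Matrix.tail_cons, Matrix.cons_val_three] at h0 h1 h2 h3
      fin_cases i <;> simp [tα]
      · rw [h0]; exact neg_if _
      · rw [h1]; exact neg_if _
      · rw [h2]; exact neg_if _
      · rw [h3]; exact neg_if _
  · intro x hα hβ
    have h1 : -x 5 = x 5 := congrFun hα 5
    have h2 : -x 5 + half = x 5 := congrFun hβ 5
    rw [h1] at h2
    exact half_ne_zero (by rwa [add_eq_left] at h2)
  · intro x hα hγ
    have h1 : -x 4 = x 4 := congrFun hα 4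
    have h2 : -x 4 + half = x 4 := congrFun hγ 4
    rw [h1] at h2
    exact half_ne_zero (by rwa [add_eq_left] at h2)
  · intro c x hx i
    have h0 : x 3 = if c 0 = true then half else 0 := hx 0
    have h1 : x 4 = if c 1 = true then half else 0 := hx 1
    have h2 : x 5 = if c 2 = true then half else 0 := hx 2
    have h3 : x 6 = if c 3 = true then half else 0 := hx 3
    fin_cases i
    · exact h0
    · exact h1
    · show -x 5 + half = if (!c 2) = true then half else 0
      rw [h2]; cases c 2 <;> simp [neg_half, half_add_half]
    · show -x 6 = if c 3 = true then half else 0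
      rw [h3]; exact neg_if _
  · intro c x hx i
    have h0 : x 3 = if c 0 = true then half else 0 := hx 0
    have h1 : x 4 = if c 1 = true then half else 0 := hx 1
    have h2 : x 5 = if c 2 = true then half else 0 := hx 2
    have h3 : x 6 = if c 3 = true then half else 0 := hx 3
    fin_cases i
    · exact h0
    · show -x 4 + half = if (!c 1) = true then half else 0
      rw [h1]; cases c 1 <;> simp [neg_half, half_add_half]
    · exact h2
    · show -x 6 + half = if (!c 3) = true then half else 0
      rw [h3]; cases c 3 <;> simp [neg_half, half_add_half]
  · refine ⟨fun c => if c 0 then (if xor (c 1) (c 3) then 0 else 1)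
      else (if xor (c 1) (c 3) then 2 else 3), ?_, by decide, by decide⟩
    decide
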